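/- cof(M) = max{d, non(M)}, where cof(M) is the least cardinality of a family of meager subsets of ω^ω cofinal in the meager ideal under inclusion, d is the least cardinality of a <*-dominating family in ω^ω, and non(M) is the least cardinality of a non-meager subset of ω^ω. -/

import Mathlib

open Filter Set Cardinal

namespace S15

set_option linter.unusedSectionVars false

variable {α : Type} [TopologicalSpace α] [DiscreteTopology α]

/-- Cylinder: points agreeing with `v` below `L`. -/
def cylF (L : ℕ) (v : ℕ → α) : Set (ℕ → α) := {z | ∀ i < L, z i = v i}

lemma self_mem_cylF (L : ℕ) (v : ℕ → α) : v ∈ cylF L v := fun _ _ => rfl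

lemma coord_open (i : ℕ) (c : α) : IsOpen {z : ℕ → α | z i = c} := by
  have : {z : ℕ → α | z i = c} = (fun z : ℕ → α => z i) ⁻¹' {c} := by ext z; simp
  rw [this]
  exact (isOpen_discrete ({c} : Set α)).preimage (continuous_apply i)

lemma isOpen_cylF (L : ℕ) (v : ℕ → α) : IsOpen (cylF L v) := by
  have h : cylF L v = ⋂ i ∈ Finset.range L, {z : ℕ → α | z i = v i} := by
    ext z; simp [cylF]
  rw [h]
  exact isOpen_biInter_finset fun i _ => coord_open i (v i)

/-- Key extension lemma: a dense open set contains a cylinder extending any stem. -/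
lemma dense_open_ext {U : Set (ℕ → α)} (hO : IsOpen U) (hD : Dense U) (L : ℕ) (v : ℕ → α) :
    ∃ (L' : ℕ) (v' : ℕ → α), L ≤ L' ∧ (∀ i < L, v' i = v i) ∧ cylF L' v' ⊆ U := by
  obtain ⟨z, hzc, hzU⟩ :=
    (mem_closure_iff.mp (hD v) (cylF L v) (isOpen_cylF L v) (self_mem_cylF L v))
  obtain ⟨I, u, hu, hsub⟩ := isOpen_pi_iff.mp hO z hzU
  refine ⟨max L ((I.sup id) + 1), z, le_max_left _ _, fun i hi => hzc i hi, ?_⟩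
  intro w hw
  apply hsub
  intro a ha
  have haL : a < max L ((I.sup id) + 1) := by
    have : a ≤ I.sup id := Finset.le_sup (f := id) ha
    omega
  rw [hw a haL]
  exact (hu a ha).2

/-- `MatchOn x a b z` : `z` agrees with `x` on `[a, b)`. -/
def MatchOn (x : ℕ → α) (a b : ℕ) (z : ℕ → α) : Prop := ∀ k, a ≤ k → k < b → z k = x k

/-- The set of `z` which eventually never match `x` on the windows `[L n, R n)`. -/
def PSet (x : ℕ → α) (L R : ℕ → ℕ) : Set (ℕ → α) :=
  {z | ∀ᶠ n in atTop, ¬ MatchOn x (L n) (R n) z}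

lemma mem_PSet {x : ℕ → α} {L R : ℕ → ℕ} {z : ℕ → α} :
    z ∈ PSet x L R ↔ ∃ N, ∀ n, N ≤ n → ¬ MatchOn x (L n) (R n) z := by
  simp [PSet, eventually_atTop]

lemma matchSet_open (x : ℕ → α) (a b : ℕ) : IsOpen {z : ℕ → α | MatchOn x a b z} := by
  have h : {z : ℕ → α | MatchOn x a b z} = ⋂ k ∈ Finset.Ico a b, {z : ℕ → α | z k = x k} := by
    ext z; simp [MatchOn]
  rw [h]
  exact isOpen_biInter_finset fun k _ => coord_open k (x k)

lemma isMeagre_PSet (x : ℕ → α) (L R : ℕ → ℕ)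
    (hL : ∀ b N, ∃ n, N ≤ n ∧ b ≤ L n) : IsMeagre (PSet x L R) := by
  unfold IsMeagre
  have hsub : (⋂ N, ⋃ n ∈ {m | N ≤ m}, {z : ℕ → α | MatchOn x (L n) (R n) z}) ⊆ (PSet x L R)ᶜ := by
    intro z hz hzP
    obtain ⟨N, hN⟩ := mem_PSet.mp hzP
    have := mem_iInter.mp hz N
    simp only [mem_iUnion, mem_setOf_eq] at this
    obtain ⟨n, hn, hmatch⟩ := this
    exact hN n hn hmatch
  refine mem_of_superset ?_ hsub
  refine (countable_iInter_mem.mpr ?_)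
  intro N
  apply residual_of_dense_open
  · exact isOpen_biUnion fun n _ => matchSet_open x (L n) (R n)
  · rw [dense_iff_inter_open]
    rintro V hV ⟨z0, hz0⟩
    obtain ⟨I, u, hu, hsub'⟩ := isOpen_pi_iff.mp hV z0 hz0
    obtain ⟨n, hnN, hbn⟩ := hL ((I.sup id) + 1) N
    refine ⟨fun k => if L n ≤ k ∧ k < R n then x k else z0 k, ?_, ?_⟩
    · apply hsub'
      intro a ha
      have h1 : a ≤ I.sup id := Finset.le_sup (f := id) ha
      have h2 : ¬ (L n ≤ a ∧ a < R n) := by omega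
      simp only [mem_setOf_eq]
      rw [if_neg h2]
      exact (hu a ha).2
    · simp only [mem_iUnion, mem_setOf_eq]
      exact ⟨n, hnN, fun k hk1 hk2 => if_pos ⟨hk1, hk2⟩⟩

/-- Complement of a dense open set is meagre. -/
lemma isMeagre_compl_dense_open {U : Set (ℕ → α)} (hO : IsOpen U) (hD : Dense U) :
    IsMeagre Uᶜ := by
  unfold IsMeagre
  rw [compl_compl]
  exact residual_of_dense_open hO hD

/-- A meagre set is covered by a countable union of complements of dense open sets. -/
lemma meagre_struct {X : Type*} [TopologicalSpace X] {A : Set X} (hA : IsMeagre A) :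
    ∃ U : ℕ → Set X, (∀ m, IsOpen (U m)) ∧ (∀ m, Dense (U m)) ∧ A ⊆ ⋃ m, (U m)ᶜ := by
  obtain ⟨S, hSo, hSd, hSc, hSi⟩ := mem_residual_iff.mp hA
  rcases S.eq_empty_or_nonempty with h | h
  · refine ⟨fun _ => univ, fun _ => isOpen_univ, fun _ => dense_univ, ?_⟩
    have : A = ∅ := by
      have : (univ : Set X) ⊆ Aᶜ := by rw [← sInter_empty, ← h]; exact hSi
      rw [eq_empty_iff_forall_notMem]; intro a ha; exact this (mem_univ a) ha
    simp [this]
  · obtain ⟨f, hf⟩ := (Set.Countable.exists_eq_range hSc h)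
    refine ⟨f, fun m => hSo _ (by rw [hf]; exact mem_range_self m),
      fun m => hSd _ (by rw [hf]; exact mem_range_self m), ?_⟩
    intro a ha
    by_contra hcon
    simp only [mem_iUnion, mem_compl_iff, not_exists, not_not] at hcon
    have : a ∈ ⋂₀ S := by
      intro t ht
      rw [hf] at ht
      obtain ⟨m, rfl⟩ := ht
      exact hcon m
    exact (hSi this) ha


section LemmaB

variable {U : ℕ → Set (ℕ → Bool)}

lemma stage_aux (hUo : ∀ m, IsOpen (U m)) (hUd : ∀ m, Dense (U m)) (L : ℕ)
    (l : List ((Fin L → Bool) × ℕ)) : ∃ (L' : ℕ) (w : ℕ → Bool), L ≤ L' ∧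
      ∀ z : ℕ → Bool, (∀ i, L ≤ i → i < L' → z i = w i) →
        ∀ p ∈ l, (∀ i (h : i < L), z i = p.1 ⟨i, h⟩) → z ∈ U p.2 := by
  induction l with
  | nil => exact ⟨L, fun _ => false, le_refl L, fun z _ p hp => absurd hp List.not_mem_nil⟩
  | cons q l ih =>
    obtain ⟨L₁, w₁, hL₁, hspec₁⟩ := ih
    set v : ℕ → Bool := fun i => if h : i < L then q.1 ⟨i, h⟩ else w₁ i with hv
    obtain ⟨L₂, v₂, hL₂, hagree, hsub⟩ := dense_open_ext (hUo q.2) (hUd q.2) L₁ v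
    refine ⟨L₂, fun i => if i < L₁ then w₁ i else v₂ i, le_trans hL₁ hL₂, ?_⟩
    intro z hcarry p hp hstem
    rcases List.mem_cons.mp hp with rfl | hpl
    · apply hsub
      intro i hiL₂
      by_cases h1 : i < L
      · rw [hstem i h1]
        have : i < L₁ := lt_of_lt_of_le h1 hL₁
        rw [hagree i this, hv]
        simp [h1]
      · by_cases h2 : i < L₁
        · have := hcarry i (not_lt.mp h1) (lt_of_lt_of_le h2 hL₂)
          rw [this]
          simp only [h2, if_pos]
          rw [hagree i h2, hv]
          simp [h1]
        · have := hcarry i (not_lt.mp h1) hiL₂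
          rw [this]
          simp [h2]
    · refine hspec₁ z ?_ p hpl hstem
      intro i hi1 hi2
      have := hcarry i hi1 (lt_of_lt_of_le hi2 hL₂)
      rw [this]
      simp [hi2]

lemma stage (hUo : ∀ m, IsOpen (U m)) (hUd : ∀ m, Dense (U m)) (n L : ℕ) :
    ∃ (L' : ℕ) (w : ℕ → Bool), L < L' ∧
      ∀ z : ℕ → Bool, (∀ i, L ≤ i → i < L' → z i = w i) → ∀ m ≤ n, z ∈ U m := by
  classical
  obtain ⟨L₁, w₁, hL₁, hspec⟩ := stage_aux hUo hUd L
    ((Finset.univ ×ˢ Finset.range (n+1)).toList)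
  refine ⟨L₁ + 1, w₁, by omega, ?_⟩
  intro z hcarry m hm
  have hmem : ((fun i : Fin L => z i.1, m) : (Fin L → Bool) × ℕ) ∈
      (Finset.univ ×ˢ Finset.range (n+1)).toList := by
    rw [Finset.mem_toList, Finset.mem_product]
    exact ⟨Finset.mem_univ _, Finset.mem_range.mpr (by omega)⟩
  exact hspec z (fun i hi1 hi2 => hcarry i hi1 (by omega)) _ hmem (fun i h => rfl)

noncomputable def bseq (hUo : ∀ m, IsOpen (U m)) (hUd : ∀ m, Dense (U m)) :
    ℕ → ℕ × (ℕ → Bool)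
  | 0 => (0, fun _ => false)
  | n+1 =>
    let p := bseq hUo hUd n
    let s := stage hUo hUd n p.1
    (s.choose, fun i => if i < p.1 then p.2 i else s.choose_spec.choose i)

lemma bseq_lt (hUo : ∀ m, IsOpen (U m)) (hUd : ∀ m, Dense (U m)) (n : ℕ) :
    (bseq hUo hUd n).1 < (bseq hUo hUd (n+1)).1 :=
  (stage hUo hUd n (bseq hUo hUd n).1).choose_spec.choose_spec.1

lemma bseq_spec (hUo : ∀ m, IsOpen (U m)) (hUd : ∀ m, Dense (U m)) (n : ℕ)
    (z : ℕ → Bool)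
    (hcarry : ∀ i, (bseq hUo hUd n).1 ≤ i → i < (bseq hUo hUd (n+1)).1 →
      z i = (bseq hUo hUd (n+1)).2 i) :
    ∀ m ≤ n, z ∈ U m := by
  apply (stage hUo hUd n (bseq hUo hUd n).1).choose_spec.choose_spec.2
  intro i hi1 hi2
  have := hcarry i hi1 hi2
  rw [this]
  show (if i < (bseq hUo hUd n).1 then _ else _) = _
  rw [if_neg (not_lt.mpr hi1)]

lemma bseq_agree (hUo : ∀ m, IsOpen (U m)) (hUd : ∀ m, Dense (U m)) (n : ℕ) (i : ℕ)
    (hi : i < (bseq hUo hUd n).1) : (bseq hUo hUd (n+1)).2 i = (bseq hUo hUd n).2 i := by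
  show (if i < (bseq hUo hUd n).1 then _ else _) = _
  rw [if_pos hi]

lemma bseq_len_mono (hUo : ∀ m, IsOpen (U m)) (hUd : ∀ m, Dense (U m)) :
    StrictMono (fun n => (bseq hUo hUd n).1) :=
  strictMono_nat_of_lt_succ (fun n => bseq_lt hUo hUd n)

lemma bseq_mono_agree (hUo : ∀ m, IsOpen (U m)) (hUd : ∀ m, Dense (U m)) (n n' : ℕ)
    (h : n ≤ n') (i : ℕ) (hi : i < (bseq hUo hUd n).1) :
    (bseq hUo hUd n').2 i = (bseq hUo hUd n).2 i := by
  induction n', h using Nat.le_induction with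
  | base => rfl
  | succ k hk ih =>
    have hik : i < (bseq hUo hUd k).1 :=
      lt_of_lt_of_le hi ((bseq_len_mono hUo hUd).monotone hk)
    rw [bseq_agree hUo hUd k i hik]
    exact ih

/-- **Lemma B** on Cantor space: every meagre set is contained in a block pattern set. -/
lemma lemmaB {A : Set (ℕ → Bool)} (hA : IsMeagre A) :
    ∃ (y : ℕ → Bool) (g : ℕ → ℕ), StrictMono g ∧ g 0 = 0 ∧
      A ⊆ PSet y g (fun n => g (n+1)) := by
  obtain ⟨U, hUo, hUd, hAsub⟩ := meagre_struct hA
  set g : ℕ → ℕ := fun n => (bseq hUo hUd n).1 with hg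
  set y : ℕ → Bool := fun i => (bseq hUo hUd (i+1)).2 i with hy
  have hgmono : StrictMono g := strictMono_nat_of_lt_succ (fun n => bseq_lt hUo hUd n)
  have hgy : ∀ n i, i < g (n+1) → (bseq hUo hUd (n+1)).2 i = y i := by
    intro n i hi
    have hin : i < g (i+1) := by
      have : i + 1 ≤ g (i+1) := by
        have := hgmono.le_apply (x := i+1)
        omega
      omega
    rcases le_or_gt (n+1) (i+1) with h | h
    · rw [hy]
      exact (bseq_mono_agree hUo hUd (n+1) (i+1) h i hi).symm
    · rw [hy]
      exact (bseq_mono_agree hUo hUd (i+1) (n+1) (by omega) i hin)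
  refine ⟨y, g, hgmono, rfl, ?_⟩
  intro z hz
  obtain ⟨m, hzm⟩ := mem_iUnion.mp (hAsub hz)
  rw [mem_PSet]
  refine ⟨m, fun n hn hmatch => ?_⟩
  have : z ∈ U m := by
    apply bseq_spec hUo hUd n z ?_ m hn
    intro i hi1 hi2
    rw [hmatch i hi1 hi2]
    exact (hgy n i hi2).symm
  exact hzm this

end LemmaB


/-- partial sums of `z i + 1`. -/
def SS (z : ℕ → ℕ) (n : ℕ) : ℕ := ∑ i ∈ Finset.range n, (z i + 1)

/-- coding of a Baire-space point as a Cantor-space point. -/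
def eC (z : ℕ → ℕ) : ℕ → Bool := fun k => decide (∃ n ≤ k, SS z (n+1) = k + 1)

lemma SS_succ (z : ℕ → ℕ) (n : ℕ) : SS z (n+1) = SS z n + (z n + 1) :=
  Finset.sum_range_succ _ n

lemma SS_zero (z : ℕ → ℕ) : SS z 0 = 0 := rfl

lemma SS_strictMono (z : ℕ → ℕ) : StrictMono (SS z) := by
  apply strictMono_nat_of_lt_succ
  intro n
  rw [SS_succ]
  omega

lemma SS_le (z : ℕ → ℕ) (n : ℕ) : n ≤ SS z n := by
  induction n with
  | zero => simp [SS_zero]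
  | succ k ih => rw [SS_succ]; omega

lemma SS_congr {z z' : ℕ → ℕ} {b : ℕ} (h : ∀ i < b, z i = z' i) :
    ∀ m ≤ b, SS z m = SS z' m := by
  intro m hm
  apply Finset.sum_congr rfl
  intro i hi
  rw [Finset.mem_range] at hi
  rw [h i (by omega)]

lemma eC_true_iff (z : ℕ → ℕ) (k : ℕ) : eC z k = true ↔ ∃ n, SS z (n+1) = k + 1 := by
  unfold eC
  rw [decide_eq_true_iff]
  constructor
  · rintro ⟨n, _, hn⟩; exact ⟨n, hn⟩
  · rintro ⟨n, hn⟩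
    refine ⟨n, ?_, hn⟩
    have := SS_le z (n+1)
    omega

lemma eC_hit (z : ℕ → ℕ) (n : ℕ) : eC z (SS z (n+1) - 1) = true := by
  rw [eC_true_iff]
  refine ⟨n, ?_⟩
  have h1 : 0 < SS z (n+1) := lt_of_lt_of_le (Nat.succ_pos n) (SS_le z (n+1))
  omega

lemma eC_gap (z : ℕ → ℕ) {n j : ℕ} (h1 : SS z n < j + 1) (h2 : j + 1 < SS z (n+1)) :
    eC z j = false := by
  by_contra h
  rw [Bool.not_eq_false, eC_true_iff] at h
  obtain ⟨m, hm⟩ := h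
  rcases lt_or_ge m n with h3 | h3
  · have := (SS_strictMono z).monotone (show m + 1 ≤ n by omega)
    omega
  · have := (SS_strictMono z).monotone (show n + 1 ≤ m + 1 by omega)
    omega

lemma eC_prefix {z z' : ℕ → ℕ} {b : ℕ} (h : ∀ i < b, z i = z' i) :
    ∀ k < SS z' b, eC z k = eC z' k := by
  intro k hk
  have hSS := SS_congr h
  have key : (∃ n, SS z (n+1) = k + 1) ↔ (∃ n, SS z' (n+1) = k + 1) := by
    constructor
    · rintro ⟨n, hn⟩
      have hb : n + 1 ≤ b := by
        by_contra hc
        have : SS z b ≤ SS z n := (SS_strictMono z).monotone (by omega)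
        have h4 : SS z b = SS z' b := hSS b (le_refl b)
        have : SS z n < SS z (n+1) := SS_strictMono z (by omega)
        omega
      exact ⟨n, by rw [← hSS (n+1) hb]; exact hn⟩
    · rintro ⟨n, hn⟩
      have hb : n + 1 ≤ b := by
        by_contra hc
        have : SS z' b ≤ SS z' n := (SS_strictMono z').monotone (by omega)
        have : SS z' n < SS z' (n+1) := SS_strictMono z' (by omega)
        omega
      exact ⟨n, by rw [hSS (n+1) hb]; exact hn⟩
  unfold eC
  apply decide_eq_decide.mpr
  constructor
  · rintro ⟨n, _, h2⟩
    obtain ⟨m, hm⟩ := key.mp ⟨n, h2⟩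
    exact ⟨m, by have := SS_le z' (m+1); omega, hm⟩
  · rintro ⟨n, _, h2⟩
    obtain ⟨m, hm⟩ := key.mpr ⟨n, h2⟩
    exact ⟨m, by have := SS_le z (m+1); omega, hm⟩

lemma SS_reflect {z zs : ℕ → ℕ} {b : ℕ} (h : ∀ j < SS zs b, eC z j = eC zs j) :
    ∀ n ≤ b, SS z n = SS zs n := by
  intro n hn
  induction n with
  | zero => simp [SS_zero]
  | succ m ih =>
    have hm : SS z m = SS zs m := ih (by omega)
    by_contra hne
    rcases lt_or_gt_of_ne hne with hlt | hgt
    · -- SS z (m+1) < SS zs (m+1)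
      set j := SS z (m+1) - 1 with hj
      have h0 : 0 < SS z (m+1) := by
        have := SS_le z (m+1); omega
      have hjt : eC z j = true := by
        have := eC_hit z m; rwa [← hj] at this
      have hgap : eC zs j = false := by
        apply eC_gap zs (n := m)
        · have : SS z m < SS z (m+1) := SS_strictMono z (by omega)
          omega
        · omega
      have hjb : j < SS zs b := by
        have : SS zs (m+1) ≤ SS zs b := (SS_strictMono zs).monotone hn
        omega
      rw [h j hjb] at hjt
      rw [hjt] at hgap
      exact Bool.noConfusion hgap
    · set j := SS zs (m+1) - 1 with hj
      have h0 : 0 < SS zs (m+1) := by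
        have := SS_le zs (m+1); omega
      have hjt : eC zs j = true := by
        have := eC_hit zs m; rwa [← hj] at this
      have hgap : eC z j = false := by
        apply eC_gap z (n := m)
        · have : SS zs m < SS zs (m+1) := SS_strictMono zs (by omega)
          omega
        · omega
      have hjb : j < SS zs b := by
        have : SS zs (m+1) ≤ SS zs b := (SS_strictMono zs).monotone hn
        omega
      rw [h j hjb] at hgap
      rw [hjt] at hgap
      exact Bool.noConfusion hgap

lemma eC_reflect {z zs : ℕ → ℕ} {b : ℕ} (h : ∀ j < SS zs b, eC z j = eC zs j) :
    ∀ i < b, z i = zs i := by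
  intro i hi
  have h1 := SS_reflect h (i+1) (by omega)
  have h2 := SS_reflect h i (by omega)
  rw [SS_succ, SS_succ] at h1
  omega

lemma continuous_eC : Continuous eC := by
  apply continuous_pi
  intro k
  have hfac : (fun z : ℕ → ℕ => eC z k) =
      (fun v : Fin (k+1) → ℕ =>
        decide (∃ n ≤ k, (∑ i ∈ Finset.range (n+1), (v ⟨i % (k+1), Nat.mod_lt i (by omega)⟩ + 1)) = k + 1))
      ∘ (fun z => fun i : Fin (k+1) => z i.1) := by
    funext z
    show eC z k = _
    unfold eC
    simp only [Function.comp_apply]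
    apply decide_eq_decide.mpr
    constructor
    · rintro ⟨n, hn, hs⟩
      refine ⟨n, hn, ?_⟩
      rw [← hs]
      apply Finset.sum_congr rfl
      intro i hi
      rw [Finset.mem_range] at hi
      congr 2
      exact Nat.mod_eq_of_lt (by omega)
    · rintro ⟨n, hn, hs⟩
      refine ⟨n, hn, ?_⟩
      rw [← hs]
      apply Finset.sum_congr rfl
      intro i hi
      rw [Finset.mem_range] at hi
      congr 2
      exact (Nat.mod_eq_of_lt (by omega)).symm
  rw [hfac]
  exact (continuous_of_discreteTopology).comp (continuous_pi fun i => continuous_apply i.1)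

section Decode

def InfTrue (y : ℕ → Bool) : Prop := ∀ N, ∃ j, N ≤ j ∧ y j = true

lemma posF_ex0 (y : ℕ → Bool) (hy : InfTrue y) : ∃ j, y j = true :=
  ⟨(hy 0).choose, (hy 0).choose_spec.2⟩

lemma posF_exS (y : ℕ → Bool) (hy : InfTrue y) (p : ℕ) : ∃ j, p + 1 ≤ j ∧ y j = true :=
  hy (p+1)

/-- position of the `n`-th `true` in `y`. -/
noncomputable def posF (y : ℕ → Bool) (hy : InfTrue y) : ℕ → ℕ
  | 0 => Nat.find (posF_ex0 y hy)
  | n+1 => Nat.find (posF_exS y hy (posF y hy n))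

lemma posF_true (y : ℕ → Bool) (hy : InfTrue y) : ∀ n, y (posF y hy n) = true
  | 0 => Nat.find_spec (posF_ex0 y hy)
  | n+1 => (Nat.find_spec (posF_exS y hy (posF y hy n))).2

lemma posF_lt_succ (y : ℕ → Bool) (hy : InfTrue y) (n : ℕ) :
    posF y hy n < posF y hy (n+1) := by
  have := (Nat.find_spec (posF_exS y hy (posF y hy n))).1
  show posF y hy n < Nat.find (posF_exS y hy (posF y hy n))
  omega

lemma posF_zero_min (y : ℕ → Bool) (hy : InfTrue y) {j : ℕ} (hj : j < posF y hy 0) :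
    y j = false := by
  have hj' : j < Nat.find (posF_ex0 y hy) := hj
  have := Nat.find_min (posF_ex0 y hy) hj'
  simpa using this

lemma posF_gap (y : ℕ → Bool) (hy : InfTrue y) {n j : ℕ} (h1 : posF y hy n < j)
    (h2 : j < posF y hy (n+1)) : y j = false := by
  have h2' : j < Nat.find (posF_exS y hy (posF y hy n)) := h2
  have := Nat.find_min (posF_exS y hy (posF y hy n)) h2'
  simp only [not_and] at this
  by_contra hc
  rw [Bool.not_eq_false] at hc
  exact (this (by omega)) hc

lemma posF_surj (y : ℕ → Bool) (hy : InfTrue y) {k : ℕ} (hk : y k = true) :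
    ∃ n, posF y hy n = k := by
  induction k using Nat.strong_induction_on with
  | _ k ih =>
    by_cases hprev : ∃ j, j < k ∧ y j = true
    · obtain ⟨j1, hj1, hyj1⟩ := hprev
      set j0 := Nat.findGreatest (fun j => y j = true) (k-1) with hj0
      have hj0t : y j0 = true := by
        exact Nat.findGreatest_spec (P := fun j => y j = true) (m := j1) (n := k-1)
          (by omega) hyj1
      have hj0lt : j0 < k := by
        have : j0 ≤ k - 1 := Nat.findGreatest_le _
        omega
      have hmax : ∀ j, j0 < j → j < k → y j = false := by
        intro j hja hjb
        have := Nat.findGreatest_is_greatest (P := fun j => y j = true) (n := k-1) hja (by omega)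
        simpa using this
      obtain ⟨n, hn⟩ := ih j0 hj0lt hj0t
      refine ⟨n+1, ?_⟩
      show Nat.find (posF_exS y hy (posF y hy n)) = k
      rw [Nat.find_eq_iff]
      constructor
      · exact ⟨by omega, hk⟩
      · intro j hj
        simp only [not_and]
        intro hja
        rw [hn] at hja
        rw [hmax j (by omega) hj]
        simp
    · refine ⟨0, ?_⟩
      show Nat.find (posF_ex0 y hy) = k
      rw [Nat.find_eq_iff]
      refine ⟨hk, ?_⟩
      intro j hj
      simp only [not_exists, not_and] at hprev
      have := hprev j
      intro hc
      rw [hc] at this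
      exact (this hj) rfl

/-- decoding a Cantor point with infinitely many `true`s back into Baire space. -/
noncomputable def dInv (y : ℕ → Bool) (hy : InfTrue y) : ℕ → ℕ := fun n =>
  match n with
  | 0 => posF y hy 0
  | n+1 => posF y hy (n+1) - posF y hy n - 1

lemma SS_dInv (y : ℕ → Bool) (hy : InfTrue y) (n : ℕ) :
    SS (dInv y hy) (n+1) = posF y hy n + 1 := by
  induction n with
  | zero => rw [SS_succ, SS_zero]; simp [dInv]
  | succ m ih =>
    rw [SS_succ, ih]
    show posF y hy m + 1 + ((posF y hy (m+1) - posF y hy m - 1) + 1) = _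
    have := posF_lt_succ y hy m
    omega

lemma eC_dInv (y : ℕ → Bool) (hy : InfTrue y) : eC (dInv y hy) = y := by
  funext k
  have hiff : (∃ n, SS (dInv y hy) (n+1) = k + 1) ↔ y k = true := by
    constructor
    · rintro ⟨n, hn⟩
      rw [SS_dInv] at hn
      have : posF y hy n = k := by omega
      rw [← this]
      exact posF_true y hy n
    · intro hk
      obtain ⟨n, hn⟩ := posF_surj y hy hk
      exact ⟨n, by rw [SS_dInv, hn]⟩
  cases hyk : y k
  · have hne : ¬ ∃ n, SS (dInv y hy) (n+1) = k + 1 := by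
      rw [hiff, hyk]; simp
    rw [← Bool.not_eq_true, eC_true_iff]
    exact hne
  · rw [eC_true_iff]
    exact hiff.mpr hyk

end Decode

lemma eC_inf (z : ℕ → ℕ) : ∀ N, ∃ j, N ≤ j ∧ eC z j = true := by
  intro N
  refine ⟨SS z (N+1) - 1, ?_, eC_hit z N⟩
  have := SS_le z (N+1)
  omega


/-! ### Transfer between Baire space and Cantor space -/

lemma isMeagre_iUnion_compl {X : Type*} [TopologicalSpace X] (V : ℕ → Set X)
    (ho : ∀ m, IsOpen (V m)) (hd : ∀ m, Dense (V m)) : IsMeagre (⋃ m, (V m)ᶜ) := by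
  unfold IsMeagre
  have : (⋃ m, (V m)ᶜ)ᶜ = ⋂ m, V m := by
    simp [compl_iUnion]
  rw [this]
  exact countable_iInter_mem.mpr fun m => residual_of_dense_open (ho m) (hd m)

lemma isMeagre_of_subset_iUnion_compl {X : Type*} [TopologicalSpace X] {A : Set X}
    (V : ℕ → Set X) (ho : ∀ m, IsOpen (V m)) (hd : ∀ m, Dense (V m))
    (hsub : A ⊆ ⋃ m, (V m)ᶜ) : IsMeagre A :=
  (isMeagre_iUnion_compl V ho hd).mono hsub

lemma infTrue_mem_range {y : ℕ → Bool} (hy : InfTrue y) : y ∈ range eC :=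
  ⟨dInv y hy, eC_dInv y hy⟩

/-- T2: preimages of meagre sets under the coding are meagre. -/
lemma meagre_preimage {B : Set (ℕ → Bool)} (hB : IsMeagre B) : IsMeagre (eC ⁻¹' B) := by
  obtain ⟨U, hUo, hUd, hBsub⟩ := meagre_struct hB
  apply isMeagre_of_subset_iUnion_compl (fun m => eC ⁻¹' (U m))
  · exact fun m => (hUo m).preimage continuous_eC
  · intro m
    rw [dense_iff_inter_open]
    rintro V hV ⟨z, hz⟩
    obtain ⟨I, u, hu, hsub⟩ := isOpen_pi_iff.mp hV z hz
    set b := (I.sup id) + 1 with hb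
    obtain ⟨L₂, v₂, hL₂, hagree, hcyl⟩ := dense_open_ext (hUo m) (hUd m) (SS z b) (eC z)
    set ys : ℕ → Bool := fun j => if j < L₂ then v₂ j else true with hys
    have hyInf : InfTrue ys := by
      intro N
      refine ⟨N + L₂, by omega, ?_⟩
      show (if N + L₂ < L₂ then v₂ (N + L₂) else true) = true
      rw [if_neg (by omega)]
    set z' := dInv ys hyInf with hz'
    have hecz' : eC z' = ys := eC_dInv ys hyInf
    have hagree2 : ∀ j, j < SS z b → eC z' j = eC z j := by
      intro j hj
      rw [hecz', hys]
      have hjL : j < L₂ := by omega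
      simp only [hjL, if_pos]
      exact hagree j hj
    have hrefl : ∀ i < b, z' i = z i := eC_reflect hagree2
    refine ⟨z', ?_, ?_⟩
    · apply hsub
      intro a ha
      have haI : a ≤ I.sup id := Finset.le_sup (f := id) ha
      rw [hrefl a (by omega)]
      exact (hu a ha).2
    · show eC z' ∈ U m
      apply hcyl
      intro j hj
      rw [hecz', hys]
      simp [hj]
  · intro w hw
    obtain ⟨m, hm⟩ := mem_iUnion.mp (hBsub hw)
    exact mem_iUnion.mpr ⟨m, hm⟩

/-- The image sets witnessing T3. -/
def WSet (V : Set (ℕ → ℕ)) : Set (ℕ → Bool) :=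
  ⋃ (p : {q : ℕ × (ℕ → ℕ) // cylF q.1 q.2 ⊆ V}), cylF (SS p.1.2 p.1.1) (eC p.1.2)

lemma WSet_open (V : Set (ℕ → ℕ)) : IsOpen (WSet V) :=
  isOpen_iUnion fun p => isOpen_cylF _ _

lemma WSet_dense {V : Set (ℕ → ℕ)} (hVo : IsOpen V) (hVd : Dense V) : Dense (WSet V) := by
  rw [dense_iff_inter_open]
  rintro U₂ hU₂ ⟨q, hq⟩
  obtain ⟨I, u, hu, hsub⟩ := isOpen_pi_iff.mp hU₂ q hq
  set c := (I.sup id) + 1 with hc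
  set ys : ℕ → Bool := fun j => if j < c then q j else true with hys
  have hyInf : InfTrue ys := by
    intro N
    refine ⟨N + c, by omega, ?_⟩
    show (if N + c < c then q (N + c) else true) = true
    rw [if_neg (by omega)]
  set z₀ := dInv ys hyInf with hz₀
  obtain ⟨b', z', hb', hagr, hcyl⟩ := dense_open_ext hVo hVd c z₀
  refine ⟨eC z', ?_, mem_iUnion.mpr ⟨⟨(b', z'), hcyl⟩, fun j hj => rfl⟩⟩
  apply hsub
  intro a ha
  have haI : a ≤ I.sup id := Finset.le_sup (f := id) ha
  have hac : a < c := by omega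
  have h1 : eC z' a = eC z₀ a := by
    apply eC_prefix (b := c) (fun i hi => hagr i hi) a
    have := SS_le z₀ c
    omega
  have h2 : eC z₀ a = ys a := by rw [eC_dInv ys hyInf]
  rw [h1, h2, hys]
  simp only [hac, if_pos]
  exact (hu a ha).2

/-- T3: images of meagre sets under the coding are meagre. -/
lemma meagre_image {B : Set (ℕ → ℕ)} (hB : IsMeagre B) : IsMeagre (eC '' B) := by
  obtain ⟨V, hVo, hVd, hBsub⟩ := meagre_struct hB
  apply isMeagre_of_subset_iUnion_compl (fun m => WSet (V m))
  · exact fun m => WSet_open (V m)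
  · exact fun m => WSet_dense (hVo m) (hVd m)
  · rintro w ⟨z, hzB, rfl⟩
    obtain ⟨m, hm⟩ := mem_iUnion.mp (hBsub hzB)
    refine mem_iUnion.mpr ⟨m, ?_⟩
    intro hWm
    obtain ⟨⟨⟨bs, zs⟩, hcyl⟩, hmem⟩ := mem_iUnion.mp hWm
    have hagr : ∀ j < SS zs bs, eC z j = eC zs j := fun j hj => hmem j hj
    have : ∀ i < bs, z i = zs i := eC_reflect hagr
    exact hm (hcyl this)

/-! ### Countable sets are meagre -/

lemma dense_compl_singleton' {α : Type} [TopologicalSpace α] [DiscreteTopology α]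
    [Nontrivial α] (p : ℕ → α) : Dense ({p}ᶜ : Set (ℕ → α)) := by
  rw [dense_iff_inter_open]
  rintro V hV ⟨q, hq⟩
  obtain ⟨I, u, hu, hsub⟩ := isOpen_pi_iff.mp hV q hq
  set b := (I.sup id) + 1 with hb
  obtain ⟨cv, hcv⟩ := exists_ne (p b)
  refine ⟨fun i => if i = b then cv else q i, ?_, ?_⟩
  · apply hsub
    intro a ha
    have haI : a ≤ I.sup id := Finset.le_sup (f := id) ha
    have hab : ¬ a = b := by omega
    show (if a = b then cv else q a) ∈ u a
    rw [if_neg hab]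
    exact (hu a ha).2
  · intro hmem
    simp only [mem_singleton_iff] at hmem
    have := congrFun hmem b
    rw [if_pos rfl] at this
    exact hcv this

lemma isMeagre_of_countable {α : Type} [TopologicalSpace α] [DiscreteTopology α]
    [Nontrivial α] {C : Set (ℕ → α)} (hC : C.Countable) : IsMeagre C := by
  unfold IsMeagre
  have hCc : Cᶜ = ⋂ p ∈ C, ({p}ᶜ : Set (ℕ → α)) := by
    ext q
    simp only [mem_compl_iff, mem_iInter, mem_compl_iff, mem_singleton_iff]
    constructor
    · intro h p hp hqp
      rw [hqp] at h
      exact h hp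
    · intro h hq
      exact h q hq rfl
  rw [hCc]
  refine (countable_bInter_mem hC).mpr fun p _ =>
    residual_of_dense_open (isOpen_compl_iff.mpr isClosed_singleton) (dense_compl_singleton' p)

/-- The complement of the range of the coding is meagre in Cantor space. -/
lemma isMeagre_compl_range_eC : IsMeagre ((range eC)ᶜ) := by
  apply IsMeagre.mono ?_ (isMeagre_of_countable (C := {y : ℕ → Bool | ¬ InfTrue y}) ?_)
  · intro y hy hyInf
    exact hy (infTrue_mem_range hyInf)
  · have hsub : {y : ℕ → Bool | ¬ InfTrue y} ⊆
        ⋃ N, (fun v : Fin N → Bool => (fun j => if h : j < N then v ⟨j, h⟩ else false)) '' univ := by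
      intro y hy
      rw [mem_setOf_eq] at hy
      unfold InfTrue at hy
      push_neg at hy
      obtain ⟨N, hN⟩ := hy
      refine mem_iUnion.mpr ⟨N, ⟨fun i => y i.1, mem_univ _, ?_⟩⟩
      funext j
      by_cases h : j < N
      · simp [h]
      · show (if h : j < N then y j else false) = y j
        rw [dif_neg h]
        have := hN j (by omega)
        exact (Bool.eq_false_iff.mpr this).symm
    apply Set.Countable.mono hsub
    exact countable_iUnion fun N => (countable_univ).image _

/-! ### index helper for strictly monotone sequences -/

lemma strictMono_exists_idx (u : ℕ → ℕ) (hu : StrictMono u) (k : ℕ) : ∃ n, k < u (n+1) :=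
  ⟨k, lt_of_lt_of_le (by omega) (hu.le_apply (x := k+1))⟩

noncomputable def idx (u : ℕ → ℕ) (hu : StrictMono u) (k : ℕ) : ℕ :=
  Nat.find (strictMono_exists_idx u hu k)

lemma idx_lt (u : ℕ → ℕ) (hu : StrictMono u) (k : ℕ) : k < u (idx u hu k + 1) :=
  Nat.find_spec (strictMono_exists_idx u hu k)

lemma idx_le (u : ℕ → ℕ) (hu : StrictMono u) (h0 : u 0 = 0) (k : ℕ) :
    u (idx u hu k) ≤ k := by
  cases h : idx u hu k with
  | zero => rw [h0]; omega
  | succ n =>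
    have h' : Nat.find (strictMono_exists_idx u hu k) = n + 1 := h
    have := Nat.find_min (strictMono_exists_idx u hu k) (m := n) (by omega)
    omega

lemma idx_unique (u : ℕ → ℕ) (hu : StrictMono u) {n k : ℕ} (h1 : u n ≤ k)
    (h2 : k < u (n+1)) : idx u hu k = n := by
  have hle : idx u hu k ≤ n := Nat.find_min' (strictMono_exists_idx u hu k) h2
  rcases lt_or_eq_of_le hle with hlt | heq
  · have : u (idx u hu k + 1) ≤ u n := hu.monotone (by omega)
    have := idx_lt u hu k
    omega
  · exact heq

/-! ### the dominating extraction -/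

lemma engulf_of_PSet_subset {x : ℕ → Bool} {f H : ℕ → ℕ} (hf : StrictMono f)
    (hH : StrictMono H)
    (hsub : PSet (fun _ => false) H (fun m => H (m+1)) ⊆ PSet x f (fun n => f (n+1))) :
    ∀ᶠ n in atTop, ∃ m, f n ≤ H m ∧ H (m+1) ≤ f (n+1) ∧
      (∀ k, H m ≤ k → k < H (m+1) → x k = false) := by
  classical
  by_contra hcon
  rw [Filter.not_eventually] at hcon
  have hTinf : {n | ¬ ∃ m, f n ≤ H m ∧ H (m+1) ≤ f (n+1) ∧
      (∀ k, H m ≤ k → k < H (m+1) → x k = false)}.Infinite :=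
    Nat.frequently_atTop_iff_infinite.mp hcon
  set T := {n | ¬ ∃ m, f n ≤ H m ∧ H (m+1) ≤ f (n+1) ∧
      (∀ k, H m ≤ k → k < H (m+1) → x k = false)} with hT
  set σ : ℕ → ℕ := fun j => Nat.nth (· ∈ T) (2*j) with hσ
  have hσmem : ∀ j, σ j ∈ T := fun j => Nat.nth_mem_of_infinite hTinf (2*j)
  have hσmono : StrictMono σ := by
    intro a b hab
    exact Nat.nth_strictMono hTinf (by omega)
  have hσgap : ∀ j j', j < j' → σ j + 2 ≤ σ j' := by
    intro j j' hjj
    have h1 : Nat.nth (· ∈ T) (2*j) < Nat.nth (· ∈ T) (2*j+1) :=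
      Nat.nth_strictMono hTinf (by omega)
    have h2 : Nat.nth (· ∈ T) (2*j+1) < Nat.nth (· ∈ T) (2*j') :=
      Nat.nth_strictMono hTinf (by omega)
    simp only [hσ]
    omega
  set z : ℕ → Bool := fun k =>
    if ∃ j, f (σ j) ≤ k ∧ k < f (σ j + 1) then x k else true with hz
  have hzpos : ∀ k, (∃ j, f (σ j) ≤ k ∧ k < f (σ j + 1)) → z k = x k := by
    intro k hk
    show (if ∃ j, f (σ j) ≤ k ∧ k < f (σ j + 1) then x k else true) = x k
    rw [if_pos hk]
  have hzneg : ∀ k, ¬ (∃ j, f (σ j) ≤ k ∧ k < f (σ j + 1)) → z k = true := by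
    intro k hk
    show (if ∃ j, f (σ j) ≤ k ∧ k < f (σ j + 1) then x k else true) = true
    rw [if_neg hk]
  have hzB : z ∈ PSet (fun _ => false) H (fun m => H (m+1)) := by
    rw [mem_PSet]
    refine ⟨0, fun m _ hmatch => ?_⟩
    have hcov : ∀ k, H m ≤ k → k < H (m+1) → ∃ j, f (σ j) ≤ k ∧ k < f (σ j + 1) := by
      intro k hk1 hk2
      by_contra hnc
      have h1 := hmatch k hk1 hk2
      rw [hzneg k hnc] at h1
      exact Bool.noConfusion h1
    have hHm : H m < H (m+1) := hH (by omega)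
    obtain ⟨j₀, hj₀1, hj₀2⟩ := hcov (H m) (le_refl _) hHm
    by_cases hwhole : H (m+1) ≤ f (σ j₀ + 1)
    · apply hσmem j₀
      refine ⟨m, hj₀1, hwhole, ?_⟩
      intro k hk1 hk2
      have hkblk : f (σ j₀) ≤ k ∧ k < f (σ j₀ + 1) := ⟨le_trans hj₀1 hk1, by omega⟩
      have hzk := hmatch k hk1 hk2
      rw [hzpos k ⟨j₀, hkblk⟩] at hzk
      exact hzk
    · set c := f (σ j₀ + 1) with hc
      have hcwin : H m ≤ c ∧ c < H (m+1) := ⟨by omega, by omega⟩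
      obtain ⟨j', hj'1, hj'2⟩ := hcov c hcwin.1 hcwin.2
      have hle : σ j' ≤ σ j₀ + 1 := by
        rw [← hf.le_iff_le]
        exact hj'1
      have hgt : σ j₀ < σ j' := by
        have : σ j₀ + 1 < σ j' + 1 := by
          rw [← hf.lt_iff_lt]
          exact hj'2
        omega
      have heq : σ j' = σ j₀ + 1 := by omega
      have hjj : j₀ < j' := by
        by_contra hjc
        have : σ j' ≤ σ j₀ := hσmono.monotone (by omega)
        omega
      have := hσgap j₀ j' hjj
      omega
  have hzA : z ∉ PSet x f (fun n => f (n+1)) := by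
    rw [mem_PSet]
    rintro ⟨N, hN⟩
    apply hN (σ N) ?_
    · intro k hk1 hk2
      exact hzpos k ⟨N, hk1, hk2⟩
    · calc N ≤ 2*N := by omega
        _ ≤ Nat.nth (· ∈ T) (2*N) := (Nat.nth_strictMono hTinf).le_apply
  exact hzA (hsub hzB)

/-- monotone strict majorant. -/
def hMaj (h₀ : ℕ → ℕ) : ℕ → ℕ := fun k => 1 + (Finset.range (k+1)).sup h₀

lemma hMaj_mono (h₀ : ℕ → ℕ) : Monotone (hMaj h₀) := by
  intro a b hab
  unfold hMaj
  have : Finset.range (a+1) ⊆ Finset.range (b+1) := Finset.range_mono (show a+1 ≤ b+1 by omega)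
  have := Finset.sup_mono (f := h₀) this
  omega

lemma lt_hMaj (h₀ : ℕ → ℕ) (k : ℕ) : h₀ k < hMaj h₀ k := by
  unfold hMaj
  have : h₀ k ≤ (Finset.range (k+1)).sup h₀ :=
    Finset.le_sup (Finset.mem_range.mpr (by omega))
  omega

/-- iterated block sequence built from `h₀`. -/
def HOf (h₀ : ℕ → ℕ) : ℕ → ℕ
  | 0 => 0
  | m+1 => HOf h₀ m + hMaj h₀ (HOf h₀ m) + 1

lemma HOf_strictMono (h₀ : ℕ → ℕ) : StrictMono (HOf h₀) :=
  strictMono_nat_of_lt_succ (fun m => by show HOf h₀ m < HOf h₀ m + _ + 1; omega)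

/-- candidate dominating function extracted from a block structure. -/
noncomputable def gOf (f : ℕ → ℕ) (hf : StrictMono f) : ℕ → ℕ :=
  fun k => f (idx f hf k + 2)

lemma dom_extract {x : ℕ → Bool} {f : ℕ → ℕ} (hf : StrictMono f) (hf0 : f 0 = 0)
    (h₀ : ℕ → ℕ)
    (hsub : PSet (fun _ => false) (HOf h₀) (fun m => HOf h₀ (m+1)) ⊆
      PSet x f (fun n => f (n+1))) :
    ∀ᶠ k in atTop, h₀ k < gOf f hf k := by
  obtain ⟨N₀, hN₀⟩ := eventually_atTop.mp
    (engulf_of_PSet_subset hf (HOf_strictMono h₀) hsub)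
  rw [eventually_atTop]
  refine ⟨f (N₀ + 1), fun k hk => ?_⟩
  set n := idx f hf k with hn
  have h1 : f n ≤ k := idx_le f hf hf0 k
  have h2 : k < f (n+1) := idx_lt f hf k
  have hnN : N₀ ≤ n + 1 := by
    by_contra hc
    have : f (n+1) ≤ f (N₀+1) := hf.monotone (by omega)
    omega
  obtain ⟨m, hm1, hm2, _⟩ := hN₀ (n+1) hnN
  have hkHm : k ≤ HOf h₀ m := by omega
  have c1 : h₀ k < hMaj h₀ k := lt_hMaj h₀ k
  have c2 : hMaj h₀ k ≤ hMaj h₀ (HOf h₀ m) := hMaj_mono h₀ hkHm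
  have c3 : hMaj h₀ (HOf h₀ m) < HOf h₀ (m+1) := by
    show hMaj h₀ (HOf h₀ m) < HOf h₀ m + hMaj h₀ (HOf h₀ m) + 1
    omega
  show h₀ k < f (idx f hf k + 2)
  rw [← hn]
  have hq : f (n + 1 + 1) = f (n + 2) := rfl
  omega

/-! ### the upper bound construction -/

/-- zone sequence from `h`. -/
def zOf (h : ℕ → ℕ) : ℕ → ℕ
  | 0 => 0
  | n+1 => zOf h n + h (zOf h n) + 1

lemma zOf_strictMono (h : ℕ → ℕ) : StrictMono (zOf h) :=
  strictMono_nat_of_lt_succ (fun n => by show zOf h n < zOf h n + _ + 1; omega)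

lemma zOf_zero (h : ℕ → ℕ) : zOf h 0 = 0 := rfl

lemma zOf_ge (h : ℕ → ℕ) (n : ℕ) : n ≤ zOf h n := (zOf_strictMono h).le_apply

/-- decoding of a natural number into an interval-word claim. -/
noncomputable def decPair (n : ℕ) : ℕ × List Bool := (Encodable.decode n).getD (0, [])

lemma decPair_encode (p : ℕ × List Bool) : decPair (Encodable.encode p) = p := by
  unfold decPair
  rw [Encodable.encodek]
  rfl

/-- the guessing-built Cantor point. -/
noncomputable def xOf (φ h : ℕ → ℕ) : ℕ → Bool := fun k =>
  let n := idx (zOf h) (zOf_strictMono h) k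
  let p := decPair (φ n)
  if zOf h n ≤ p.1 ∧ p.1 + p.2.length ≤ zOf h (n+1) ∧ p.1 ≤ k ∧ k < p.1 + p.2.length
  then p.2.getD (k - p.1) false else false

lemma xOf_correct (φ h : ℕ → ℕ) (n a : ℕ) (w : List Bool)
    (hφ : φ n = Encodable.encode ((a, w) : ℕ × List Bool))
    (ha1 : zOf h n ≤ a) (ha2 : a + w.length ≤ zOf h (n+1)) (k : ℕ)
    (hk1 : a ≤ k) (hk2 : k < a + w.length) : xOf φ h k = w.getD (k - a) false := by
  have hidx : idx (zOf h) (zOf_strictMono h) k = n :=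
    idx_unique (zOf h) (zOf_strictMono h) (by omega) (by omega)
  unfold xOf
  simp only [hidx, hφ, decPair_encode]
  rw [if_pos ⟨ha1, ha2, hk1, hk2⟩]

/-- The big covering lemma on Cantor space. -/
lemma cover_lemma {S D : Set (ℕ → ℕ)}
    (hS : ¬ IsMeagre S) (hD : ∀ f : ℕ → ℕ, ∃ g ∈ D, ∀ᶠ k in atTop, f k < g k)
    {B : Set (ℕ → Bool)} (hB : IsMeagre B) :
    ∃ φ ∈ S, ∃ h ∈ D, ∃ h' ∈ D,
      B ⊆ PSet (xOf φ h) (fun k => k) (fun k => k + h' k + 1) := by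
  classical
  obtain ⟨y, g, hg, hg0, hBsub⟩ := lemmaB hB
  obtain ⟨h, hhD, hh⟩ := hD (gOf g hg)
  obtain ⟨Na, hNa⟩ := eventually_atTop.mp hh
  -- block inside each far zone
  set mb : ℕ → ℕ := fun n => idx g hg (zOf h n) + 1 with hmb
  have hval : ∀ n, Na ≤ n → zOf h n ≤ g (mb n) ∧ g (mb n + 1) ≤ zOf h (n+1) := by
    intro n hn
    have hz : Na ≤ zOf h n := le_trans hn (zOf_ge h n)
    have h1 := hNa (zOf h n) hz
    have h2 : zOf h n < g (idx g hg (zOf h n) + 1) := idx_lt g hg (zOf h n)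
    constructor
    · simp only [hmb]; omega
    · have : gOf g hg (zOf h n) = g (idx g hg (zOf h n) + 2) := rfl
      have hzs : zOf h (n+1) = zOf h n + h (zOf h n) + 1 := rfl
      simp only [hmb]
      have : g (idx g hg (zOf h n) + 1 + 1) = g (idx g hg (zOf h n) + 2) := rfl
      omega
  set G : ℕ → ℕ := fun n => Encodable.encode
    ((g (mb n), List.ofFn (fun i : Fin (g (mb n + 1) - g (mb n)) => y (g (mb n) + i.1))) :
      ℕ × List Bool) with hG
  -- guess
  have hNEQmeagre : IsMeagre (PSet G (fun n => n) (fun n => n + 1)) :=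
    isMeagre_PSet G _ _ (fun b N => ⟨max b N, le_max_right _ _, le_max_left _ _⟩)
  have hφex : ∃ φ ∈ S, φ ∉ PSet G (fun n => n) (fun n => n + 1) := by
    by_contra hc
    push_neg at hc
    exact hS (hNEQmeagre.mono hc)
  obtain ⟨φ, hφS, hφ⟩ := hφex
  have hφfreq : ∀ N, ∃ n, N ≤ n ∧ φ n = G n := by
    intro N
    rw [mem_PSet] at hφ
    push_neg at hφ
    obtain ⟨n, hn, hmatch⟩ := hφ N
    exact ⟨n, hn, hmatch n (le_refl n) (by omega)⟩
  set C : Set ℕ := {n | Na ≤ n ∧ φ n = G n} with hC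
  have hCinf : C.Infinite := by
    rw [← Nat.frequently_atTop_iff_infinite]
    rw [frequently_atTop]
    intro N
    obtain ⟨n, hn1, hn2⟩ := hφfreq (max N Na)
    exact ⟨n, le_trans (le_max_left _ _) hn1, le_trans (le_max_right _ _) hn1, hn2⟩
  -- second domination
  obtain ⟨h', hh'D, hh'⟩ := hD (fun k => zOf h (Nat.nth (· ∈ C) (k+1) + 1))
  obtain ⟨Nb, hNb⟩ := eventually_atTop.mp hh'
  refine ⟨φ, hφS, h, hhD, h', hh'D, ?_⟩
  intro z hz
  have hzy := hBsub hz
  rw [mem_PSet] at hzy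
  obtain ⟨Ny, hNy⟩ := hzy
  rw [mem_PSet]
  refine ⟨max Nb (g (Ny + 1)), fun k hk hmatch => ?_⟩
  set nn : ℕ := Nat.nth (· ∈ C) (k+1) with hnn
  have hnnC : nn ∈ C := Nat.nth_mem_of_infinite hCinf (k+1)
  have hnnge : k + 1 ≤ nn := (Nat.nth_strictMono hCinf).le_apply
  obtain ⟨hnnNa, hnnG⟩ := hnnC
  obtain ⟨hb1, hb2⟩ := hval nn hnnNa
  have hzn : k < zOf h nn := lt_of_lt_of_le (by omega) (zOf_ge h nn)
  have hwin : zOf h (nn + 1) < k + h' k + 1 := by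
    have hx := hNb k (le_trans (le_max_left _ _) hk)
    rw [← hnn] at hx
    omega
  -- the g-block `mb nn` is matched by `z` against `y`
  have hgmb0 : g (mb nn) < g (mb nn + 1) := hg (by omega)
  have hmbNy : Ny ≤ mb nn := by
    have hgk : g (Ny + 1) ≤ k := le_trans (le_max_right _ _) hk
    have h2 : k < g (mb nn + 1) := by omega
    by_contra hcon
    have : g (mb nn + 1) ≤ g (Ny + 1) := hg.monotone (by omega)
    omega
  apply hNy (mb nn) hmbNy
  intro k' hk'1 hk'2
  have hzx : z k' = xOf φ h k' := hmatch k' (by omega) (by omega)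
  rw [hzx]
  set w : List Bool :=
    List.ofFn (fun i : Fin (g (mb nn + 1) - g (mb nn)) => y (g (mb nn) + i.1)) with hw
  have hwlen : w.length = g (mb nn + 1) - g (mb nn) := by
    rw [hw, List.length_ofFn]
  have hgmb : g (mb nn) < g (mb nn + 1) := hg (by omega)
  have := xOf_correct φ h nn (g (mb nn)) w hnnG hb1 (by omega) k' hk'1 (by omega)
  rw [this]
  have hik : k' - g (mb nn) < w.length := by omega
  rw [List.getD_eq_getElem w false hik]
  simp only [hw, List.getElem_ofFn]
  congr 1
  omega

/-! ### final assembly helpers -/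

lemma isMeagre_union {X : Type*} [TopologicalSpace X] {s t : Set X}
    (hs : IsMeagre s) (ht : IsMeagre t) : IsMeagre (s ∪ t) := by
  unfold IsMeagre at *
  rw [compl_union]
  exact inter_mem hs ht

lemma nonmeagre_univ : ¬ IsMeagre (univ : Set (ℕ → ℕ)) := by
  intro h
  unfold IsMeagre at h
  rw [compl_univ] at h
  have := (dense_of_mem_residual h).nonempty
  exact Set.not_nonempty_empty this

lemma compl_nonempty_of_meagre {A : Set (ℕ → ℕ)} (hA : IsMeagre A) : Aᶜ.Nonempty :=
  (dense_of_mem_residual hA).nonempty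

lemma HOf_unbounded (h₀ : ℕ → ℕ) : ∀ b N, ∃ n, N ≤ n ∧ b ≤ HOf h₀ n := by
  intro b N
  refine ⟨max N b, le_max_left _ _, ?_⟩
  calc b ≤ max N b := le_max_right _ _
    _ ≤ HOf h₀ (max N b) := (HOf_strictMono h₀).le_apply

/-- decompose any meagre subset of Baire space through the coding. -/
lemma codedCover {A : Set (ℕ → ℕ)} (hA : IsMeagre A) :
    IsMeagre ((eC '' A) ∪ (range eC)ᶜ) :=
  isMeagre_union (meagre_image hA) isMeagre_compl_range_eC

lemma sub_codedCover {B : Set (ℕ → Bool)} {A : Set (ℕ → ℕ)}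
    (h : eC ⁻¹' B ⊆ A) : B ⊆ (eC '' A) ∪ (range eC)ᶜ := by
  intro w hw
  by_cases hr : w ∈ range eC
  · obtain ⟨z, rfl⟩ := hr
    exact Or.inl ⟨z, h hw, rfl⟩
  · exact Or.inr hr

/-- extraction of a non-meagre set from a cofinal family. -/
lemma non_extract {𝒜 : Set (Set (ℕ → ℕ))} (hmeag : ∀ A ∈ 𝒜, IsMeagre A)
    (hcov : ∀ B : Set (ℕ → ℕ), IsMeagre B → ∃ A ∈ 𝒜, B ⊆ A) :
    ∃ S : Set (ℕ → ℕ), ¬ IsMeagre S ∧ #S ≤ #𝒜 := by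
  classical
  have hpick : ∀ A : ↥𝒜, ∃ p : ℕ → ℕ, p ∉ (A : Set (ℕ → ℕ)) := by
    intro A
    obtain ⟨p, hp⟩ := compl_nonempty_of_meagre (hmeag A A.2)
    exact ⟨p, hp⟩
  choose pk hpk using hpick
  refine ⟨range pk, ?_, Cardinal.mk_range_le⟩
  intro hmeagS
  obtain ⟨A₀, hA₀, hsub⟩ := hcov _ hmeagS
  exact hpk (⟨A₀, hA₀⟩ : ↥𝒜) (hsub ⟨⟨A₀, hA₀⟩, rfl⟩)

/-- extraction of a dominating family from a cofinal family. -/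
lemma dom_extract_family {𝒜 : Set (Set (ℕ → ℕ))} (hmeag : ∀ A ∈ 𝒜, IsMeagre A)
    (hcov : ∀ B : Set (ℕ → ℕ), IsMeagre B → ∃ A ∈ 𝒜, B ⊆ A) :
    ∃ D : Set (ℕ → ℕ), (∀ f : ℕ → ℕ, ∃ g ∈ D, ∀ᶠ k in atTop, f k < g k) ∧ #D ≤ #𝒜 := by
  classical
  have hAB : ∀ A : ↥𝒜, ∃ (x : ℕ → Bool) (f : ℕ → ℕ) (hf : StrictMono f), f 0 = 0 ∧
      ((eC '' (A : Set (ℕ → ℕ)) ∪ (range eC)ᶜ) ⊆ PSet x f (fun n => f (n+1))) := by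
    intro A
    obtain ⟨x, f, hf, hf0, hsub⟩ := lemmaB (codedCover (hmeag A A.2))
    exact ⟨x, f, hf, hf0, hsub⟩
  choose xA fA hfA hfA0 hsubA using hAB
  refine ⟨range (fun A : ↥𝒜 => gOf (fA A) (hfA A)), ?_, Cardinal.mk_range_le⟩
  intro h₀
  have hBmeag : IsMeagre (PSet (fun _ => false) (HOf h₀) (fun m => HOf h₀ (m+1))) :=
    isMeagre_PSet _ _ _ (HOf_unbounded h₀)
  obtain ⟨A, hA𝒜, hAsub⟩ := hcov _ (meagre_preimage hBmeag)
  have hchain : PSet (fun _ => false) (HOf h₀) (fun m => HOf h₀ (m+1)) ⊆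
      PSet (xA ⟨A, hA𝒜⟩) (fA ⟨A, hA𝒜⟩) (fun n => fA ⟨A, hA𝒜⟩ (n+1)) :=
    le_trans (sub_codedCover hAsub) (hsubA ⟨A, hA𝒜⟩)
  exact ⟨gOf (fA ⟨A, hA𝒜⟩) (hfA ⟨A, hA𝒜⟩), mem_range_self _,
    dom_extract (hfA ⟨A, hA𝒜⟩) (hfA0 ⟨A, hA𝒜⟩) h₀ hchain⟩

/-- the upper-bound family. -/
lemma upper_family {S D : Set (ℕ → ℕ)}
    (hS : ¬ IsMeagre S) (hD : ∀ f : ℕ → ℕ, ∃ g ∈ D, ∀ᶠ k in atTop, f k < g k) :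
    ∃ 𝒜 : Set (Set (ℕ → ℕ)), (∀ A ∈ 𝒜, IsMeagre A) ∧
      (∀ B : Set (ℕ → ℕ), IsMeagre B → ∃ A ∈ 𝒜, B ⊆ A) ∧
      #𝒜 ≤ #(↥S × ↥D × ↥D) := by
  classical
  set F : ↥S × ↥D × ↥D → Set (ℕ → ℕ) := fun p =>
    eC ⁻¹' (PSet (xOf (p.1 : ℕ → ℕ) (p.2.1 : ℕ → ℕ)) (fun k => k)
      (fun k => k + (p.2.2 : ℕ → ℕ) k + 1)) with hF
  refine ⟨range F, ?_, ?_, Cardinal.mk_range_le⟩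
  · rintro A ⟨p, rfl⟩
    exact meagre_preimage (isMeagre_PSet _ _ _
      (fun b N => ⟨max b N, le_max_right _ _, le_max_left _ _⟩))
  · intro B hB
    obtain ⟨φ, hφS, h, hhD, h', hh'D, hsub⟩ := cover_lemma hS hD (codedCover hB)
    refine ⟨F ⟨⟨φ, hφS⟩, ⟨h, hhD⟩, ⟨h', hh'D⟩⟩, mem_range_self _, ?_⟩
    intro z hz
    show eC z ∈ PSet _ _ _
    apply hsub
    exact Or.inl ⟨z, hz, rfl⟩

end S15

/-- cof(M) = max{d, non(M)} on Baire space. -/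
theorem stmt15 :
    sInf {c : Cardinal | ∃ 𝒜 : Set (Set (ℕ → ℕ)), #𝒜 = c ∧
        (∀ A ∈ 𝒜, IsMeagre A) ∧ ∀ B : Set (ℕ → ℕ), IsMeagre B → ∃ A ∈ 𝒜, B ⊆ A} =
      max
        (sInf {c : Cardinal | ∃ D : Set (ℕ → ℕ), #D = c ∧
          ∀ f : ℕ → ℕ, ∃ g ∈ D, ∀ᶠ k in atTop, f k < g k})
        (sInf {c : Cardinal | ∃ S : Set (ℕ → ℕ), #S = c ∧ ¬ IsMeagre S}) := by
  classical
  set cofS : Set Cardinal := {c : Cardinal | ∃ 𝒜 : Set (Set (ℕ → ℕ)), #𝒜 = c ∧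
      (∀ A ∈ 𝒜, IsMeagre A) ∧ ∀ B : Set (ℕ → ℕ), IsMeagre B → ∃ A ∈ 𝒜, B ⊆ A} with hcofS
  set dS : Set Cardinal := {c : Cardinal | ∃ D : Set (ℕ → ℕ), #D = c ∧
      ∀ f : ℕ → ℕ, ∃ g ∈ D, ∀ᶠ k in atTop, f k < g k} with hdS
  set nonS : Set Cardinal := {c : Cardinal | ∃ S : Set (ℕ → ℕ), #S = c ∧ ¬ IsMeagre S}
    with hnonS
  have hcof_ne : cofS.Nonempty :=
    ⟨#{A : Set (ℕ → ℕ) | IsMeagre A}, {A : Set (ℕ → ℕ) | IsMeagre A}, rfl,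
      fun A hA => hA, fun B hB => ⟨B, hB, subset_rfl⟩⟩
  have hd_ne : dS.Nonempty :=
    ⟨#(univ : Set (ℕ → ℕ)), univ, rfl, fun f =>
      ⟨fun k => f k + 1, mem_univ _, Filter.Eventually.of_forall (fun k => Nat.lt_succ_self (f k))⟩⟩
  have hnon_ne : nonS.Nonempty :=
    ⟨#(univ : Set (ℕ → ℕ)), univ, rfl, S15.nonmeagre_univ⟩
  have hd_inf : ℵ₀ ≤ sInf dS := by
    apply le_csInf hd_ne
    intro c hc
    obtain ⟨D, hDc, hDdom⟩ := hc
    by_contra hlt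
    rw [not_le] at hlt
    rw [← hDc] at hlt
    have hfin : D.Finite := Cardinal.lt_aleph0_iff_set_finite.mp hlt
    obtain ⟨g, hgD, hge⟩ := hDdom (fun k => 1 + hfin.toFinset.sup (fun g => g k))
    obtain ⟨N, hN⟩ := Filter.eventually_atTop.mp hge
    have h1 : 1 + hfin.toFinset.sup (fun g => g N) < g N := hN N le_rfl
    have h2 : g N ≤ hfin.toFinset.sup (fun g => g N) :=
      Finset.le_sup (f := fun g : ℕ → ℕ => g N) (hfin.mem_toFinset.mpr hgD)
    exact absurd (lt_of_lt_of_le (lt_of_le_of_lt (Nat.le_add_left _ 1) h1) h2) (lt_irrefl _)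
  have hnon_inf : ℵ₀ ≤ sInf nonS := by
    apply le_csInf hnon_ne
    intro c hc
    obtain ⟨S, hSc, hSnm⟩ := hc
    by_contra hlt
    rw [not_le] at hlt
    rw [← hSc] at hlt
    have hfin : S.Finite := Cardinal.lt_aleph0_iff_set_finite.mp hlt
    exact hSnm (S15.isMeagre_of_countable hfin.countable)
  apply le_antisymm
  · -- upper bound
    obtain ⟨D, hDc, hDdom⟩ := csInf_mem hd_ne
    obtain ⟨S, hSc, hSnm⟩ := csInf_mem hnon_ne
    obtain ⟨𝒜, hmeag, hcov, hcard⟩ := S15.upper_family hSnm hDdom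
    have h1 : sInf cofS ≤ #𝒜 := csInf_le' ⟨𝒜, rfl, hmeag, hcov⟩
    have h2 : #(↥S × ↥D × ↥D) = sInf nonS * (sInf dS * sInf dS) := by
      rw [Cardinal.mk_prod, Cardinal.mk_prod]
      simp only [Cardinal.lift_id]
      rw [hSc, hDc]
    have h3 : sInf nonS * (sInf dS * sInf dS) = max (sInf dS) (sInf nonS) := by
      rw [Cardinal.mul_eq_self hd_inf]
      rw [Cardinal.mul_eq_max hnon_inf hd_inf]
      exact max_comm _ _
    calc sInf cofS ≤ #𝒜 := h1
      _ ≤ #(↥S × ↥D × ↥D) := hcard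
      _ = max (sInf dS) (sInf nonS) := by rw [h2, h3]
  · -- lower bound
    obtain ⟨𝒜, hAc, hmeag, hcov⟩ := csInf_mem hcof_ne
    apply max_le
    · obtain ⟨D, hDdom, hDcard⟩ := S15.dom_extract_family hmeag hcov
      calc sInf dS ≤ #D := csInf_le' ⟨D, rfl, hDdom⟩
        _ ≤ #𝒜 := hDcard
        _ = sInf cofS := hAc
    · obtain ⟨S, hSnm, hScard⟩ := S15.non_extract hmeag hcov
      calc sInf nonS ≤ #S := csInf_le' ⟨S, rfl, hSnm⟩
        _ ≤ #𝒜 := hScard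
        _ = sInf cofS := hAc
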